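/- Let p, q be integers with 2 ≤ p < q and let γ be a real number with 0 < γ < γ_{p,q}. Let 0 < a < A be the two roots of g(u) = 1 − u^{p−1} + γ u^{q−1} in (0, ∞). Then f'(a) = 1 − p a^{p−1} + γ q a^{q−1} < 0 and f'(A) = 1 − p A^{p−1} + γ q A^{q−1} > 0. -/

import Mathlib

/-- The critical parameter `γ_{p,q} = ((p−1)/(q−1))·((q−p)/(q−1))^{(q−p)/(p−1)}`. -/
noncomputable def gammaCrit (p q : ℕ) : ℝ :=
  (((p : ℝ) - 1) / ((q : ℝ) - 1)) *
    (((q : ℝ) - (p : ℝ)) / ((q : ℝ) - 1)) ^ (((q : ℝ) - (p : ℝ)) / ((p : ℝ) - 1))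

/-- For `2 ≤ p < q`, `0 < γ < γ_{p,q}` and the two roots `0 < a < A` of
`g(u) = 1 − u^{p−1} + γ u^{q−1}` in `(0,∞)`, one has
`f'(a) = 1 − p a^{p−1} + γ q a^{q−1} < 0` and `f'(A) = 1 − p A^{p−1} + γ q A^{q−1} > 0`. -/
theorem fprime_sign_at_roots (p q : ℕ) (hp : 2 ≤ p) (hpq : p < q)
    (γ : ℝ) (hγ0 : 0 < γ) (hγ : γ < gammaCrit p q)
    (a A : ℝ) (ha : 0 < a) (haA : a < A)
    (hroota : 1 - a ^ (p - 1) + γ * a ^ (q - 1) = 0)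
    (hrootA : 1 - A ^ (p - 1) + γ * A ^ (q - 1) = 0) :
    (1 - (p : ℝ) * a ^ (p - 1) + γ * (q : ℝ) * a ^ (q - 1) < 0) ∧
    (0 < 1 - (p : ℝ) * A ^ (p - 1) + γ * (q : ℝ) * A ^ (q - 1)) := by
  set n := p - 1 with hn_def
  set m := q - 1 with hm_def
  set k := m - n with hk_def
  have hn1 : 1 ≤ n := by omega
  have hnm : n < m := by omega
  have hk1 : 1 ≤ k := by omega
  have hA0 : 0 < A := ha.trans haA
  have hcastn : (n : ℝ) = (p : ℝ) - 1 := by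
    rw [hn_def]; push_cast [Nat.cast_sub (by omega : 1 ≤ p)]; ring
  have hcastm : (m : ℝ) = (q : ℝ) - 1 := by
    rw [hm_def]; push_cast [Nat.cast_sub (by omega : 1 ≤ q)]; ring
  set g : ℝ → ℝ := fun u => 1 - u ^ n + γ * u ^ m with hg_def
  have hga : g a = 0 := hroota
  have hgA : g A = 0 := hrootA
  have hd : ∀ u : ℝ, HasDerivAt g (γ * ((m : ℝ) * u ^ (m - 1)) - (n : ℝ) * u ^ (n - 1)) u := by
    intro u
    have h1 := hasDerivAt_pow n u
    have h2 := hasDerivAt_pow m u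
    have h := ((hasDerivAt_const u (1 : ℝ)).sub h1).add ((hasDerivAt_const u γ).mul h2)
    exact h.congr_deriv (by ring)
  have hgcont : Continuous g := by
    exact (continuous_const.sub (continuous_pow n)).add (continuous_const.mul (continuous_pow m))
  -- Claim 1: γ * m * a^k < n
  have claim1 : γ * (m : ℝ) * a ^ k < (n : ℝ) := by
    by_contra h
    push_neg at h
    have hmono : StrictMonoOn g (Set.Ici a) := by
      apply strictMonoOn_of_deriv_pos (convex_Ici a) hgcont.continuousOn
      intro u hu
      rw [interior_Ici] at hu
      have hu0 : 0 < u := ha.trans hu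
      rw [(hd u).deriv]
      have hak : a ^ k < u ^ k := pow_lt_pow_left₀ hu ha.le (by omega)
      have h1 : (n : ℝ) < γ * (m : ℝ) * u ^ k := by
        have hgm : (0:ℝ) < γ * (m : ℝ) := mul_pos hγ0 (by exact_mod_cast (by omega : 0 < m))
        have : γ * (m : ℝ) * a ^ k < γ * (m : ℝ) * u ^ k := mul_lt_mul_of_pos_left hak hgm
        linarith
      have h2 : (n : ℝ) * u ^ (n - 1) < γ * (m : ℝ) * u ^ k * u ^ (n - 1) :=
        mul_lt_mul_of_pos_right h1 (pow_pos hu0 _)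
      have h3 : u ^ k * u ^ (n - 1) = u ^ (m - 1) := by
        rw [← pow_add]; congr 1; omega
      nlinarith [h2, h3]
    have := hmono Set.self_mem_Ici (Set.mem_Ici.mpr haA.le) haA
    rw [hga, hgA] at this
    exact lt_irrefl 0 this
  -- Claim 2: n < γ * m * A^k
  have claim2 : (n : ℝ) < γ * (m : ℝ) * A ^ k := by
    by_contra h
    push_neg at h
    have hanti : StrictAntiOn g (Set.Icc a A) := by
      apply strictAntiOn_of_deriv_neg (convex_Icc a A) hgcont.continuousOn
      intro u hu
      rw [interior_Icc] at hu
      have hu0 : 0 < u := ha.trans hu.1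
      rw [(hd u).deriv]
      have hak : u ^ k < A ^ k := pow_lt_pow_left₀ hu.2 hu0.le (by omega)
      have h1 : γ * (m : ℝ) * u ^ k < (n : ℝ) := by
        have hgm : (0:ℝ) < γ * (m : ℝ) := mul_pos hγ0 (by exact_mod_cast (by omega : 0 < m))
        have : γ * (m : ℝ) * u ^ k < γ * (m : ℝ) * A ^ k := mul_lt_mul_of_pos_left hak hgm
        linarith
      have h2 : γ * (m : ℝ) * u ^ k * u ^ (n - 1) < (n : ℝ) * u ^ (n - 1) :=
        mul_lt_mul_of_pos_right h1 (pow_pos hu0 _)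
      have h3 : u ^ k * u ^ (n - 1) = u ^ (m - 1) := by
        rw [← pow_add]; congr 1; omega
      nlinarith [h2, h3]
    have := hanti (Set.left_mem_Icc.mpr haA.le) (Set.right_mem_Icc.mpr haA.le) haA
    rw [hga, hgA] at this
    exact lt_irrefl 0 this
  -- Finish
  have hpa : a ^ k * a ^ n = a ^ m := by rw [← pow_add]; congr 1; omega
  have hpA : A ^ k * A ^ n = A ^ m := by rw [← pow_add]; congr 1; omega
  have e1 : γ * (m : ℝ) * a ^ m < (n : ℝ) * a ^ n := by
    have := mul_lt_mul_of_pos_right claim1 (pow_pos ha n)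
    calc γ * (m : ℝ) * a ^ m = γ * (m : ℝ) * a ^ k * a ^ n := by rw [← hpa]; ring
      _ < (n : ℝ) * a ^ n := this
  have e2 : (n : ℝ) * A ^ n < γ * (m : ℝ) * A ^ m := by
    have := mul_lt_mul_of_pos_right claim2 (pow_pos hA0 n)
    calc (n : ℝ) * A ^ n < γ * (m : ℝ) * A ^ k * A ^ n := this
      _ = γ * (m : ℝ) * A ^ m := by rw [← hpA]; ring
  constructor
  · rw [hcastn, hcastm] at e1
    linarith [hroota, e1]
  · rw [hcastn, hcastm] at e2
    linarith [hrootA, e2]
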